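/- Let MT be a tree of order n ≥ 3 with maximum degree at most 4, and for 1 ≤ i ≤ j ≤ 4 let m_{ij} denote the number of edges of MT whose endpoints have degrees i and j. Then SO₅(MT)/(2π) = (f(1,4)+f(2,4))·n/2 + (3f(1,4) − 5f(2,4))/2 + m₁₂·(f(1,2) − (3/2)f(1,4) + (1/2)f(2,4)) + m₁₃·(f(1,3) − (7/6)f(1,4) + (1/6)f(2,4)) − m₂₂·((1/2)f(1,4) + (1/2)f(2,4)) + m₂₃·(f(2,3) − (1/6)f(1,4) − (5/6)f(2,4)) + m₃₃·((1/6)f(1,4) − (7/6)f(2,4)) + m₃₄·(f(3,4) + (1/3)f(1,4) − (4/3)f(2,4)) + m₄₄·((1/2)f(1,4) − (3/2)f(2,4)). -/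

import Mathlib

/-- `f a b = |a² − b²| / (√2 + 2√(a² + b²))`. -/
noncomputable def f (a b : ℝ) : ℝ :=
  |a ^ 2 - b ^ 2| / (Real.sqrt 2 + 2 * Real.sqrt (a ^ 2 + b ^ 2))

theorem f_symm (a b : ℝ) : f a b = f b a := by
  unfold f; rw [abs_sub_comm, add_comm (a ^ 2)]

/-- The Sombor-index-like invariant `SO₅(G) = 2π · Σ_{uv ∈ E(G)} f(d(u), d(v))`. -/
noncomputable def SO5 {V : Type*} [Fintype V] [DecidableEq V] (G : SimpleGraph V)
    [DecidableRel G.Adj] : ℝ :=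
  2 * Real.pi * ∑ e ∈ G.edgeFinset,
    Sym2.lift ⟨fun u v => f (G.degree u) (G.degree v),
      fun u v => f_symm (G.degree u) (G.degree v)⟩ e

open scoped Classical in
/-- `edgeCnt G i j` is the number of edges of `G` whose endpoints have degrees `i` and `j`. -/
noncomputable def edgeCnt {V : Type*} [Fintype V] [DecidableEq V] (G : SimpleGraph V)
    [DecidableRel G.Adj] (i j : ℕ) : ℕ :=
  (G.edgeFinset.filter fun e =>
    Sym2.lift ⟨fun u v => (G.degree u = i ∧ G.degree v = j) ∨ (G.degree u = j ∧ G.degree v = i),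
      fun u v => propext (by tauto)⟩ e).card

section Aux

variable {V : Type*} [Fintype V] [DecidableEq V] (G : SimpleGraph V) [DecidableRel G.Adj]

set_option linter.unusedVariables false in
theorem my_f_self (a : ℝ) : f a a = 0 := by simp [f]

/-- The ten possible degree pairs in a molecular graph. -/
def mySet : Finset (Sym2 ℕ) :=
  {s(1,1), s(1,2), s(1,3), s(1,4), s(2,2), s(2,3), s(2,4), s(3,3), s(3,4), s(4,4)}

open scoped Classical in
noncomputable def myM (p : Sym2 ℕ) : ℕ :=
  (G.edgeFinset.filter fun e => Sym2.map (fun v => G.degree v) e = p).card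

set_option linter.unusedSectionVars false

theorem my_dart_sum (φ : ℕ → ℝ) :
    ∑ e ∈ G.edgeFinset, Sym2.lift ⟨fun u v => φ (G.degree u) + φ (G.degree v),
      fun u v => by ring⟩ e = ∑ v, (G.degree v : ℝ) * φ (G.degree v) := by
  classical
  have hW : ∑ d : G.Dart, φ (G.degree d.fst)
      = ∑ e ∈ G.edgeFinset, Sym2.lift ⟨fun u v => φ (G.degree u) + φ (G.degree v),
        fun u v => by ring⟩ e := by
    rw [← Finset.sum_fiberwise_of_maps_to (t := G.edgeFinset) (g := SimpleGraph.Dart.edge)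
      (fun d _ => by rw [SimpleGraph.mem_edgeFinset]; exact d.edge_mem)]
    refine Finset.sum_congr rfl fun e he => ?_
    induction e with
    | h u v =>
      rw [SimpleGraph.mem_edgeFinset, SimpleGraph.mem_edgeSet] at he
      let d : G.Dart := ⟨(u, v), he⟩
      have hfib : (Finset.univ.filter fun d' : G.Dart => d'.edge = s(u, v)) = {d, d.symm} := by
        have := d.edge_fiber
        exact this
      rw [hfib, Finset.sum_pair d.symm_ne.symm]
      simp [d, SimpleGraph.Dart.symm]
      congr 1
  have hV : ∑ d : G.Dart, φ (G.degree d.fst) = ∑ v, (G.degree v : ℝ) * φ (G.degree v) := by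
    rw [← Finset.sum_fiberwise_of_maps_to (g := fun d : G.Dart => d.fst)
      (fun d _ => Finset.mem_univ _)]
    refine Finset.sum_congr rfl fun v _ => ?_
    rw [Finset.sum_eq_card_nsmul (fun d hd => by
      rw [Finset.mem_filter] at hd; rw [hd.2] : ∀ d ∈ Finset.univ.filter
        (fun d : G.Dart => d.fst = v), φ (G.degree d.fst) = φ (G.degree v)),
      SimpleGraph.dart_fst_fiber_card_eq_degree, nsmul_eq_mul]
  rw [← hW, hV]

theorem my_fiber_sum (hdeg : ∀ v : V, G.degree v ≤ 4) (hpos : ∀ v : V, 1 ≤ G.degree v)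
    (g : Sym2 ℕ → ℝ) :
    ∑ e ∈ G.edgeFinset, g (Sym2.map (fun v => G.degree v) e)
      = ∑ p ∈ mySet, (myM G p : ℝ) * g p := by
  classical
  rw [← Finset.sum_fiberwise_of_maps_to (t := mySet) (g := Sym2.map (fun v => G.degree v))
    (fun e he => ?_)]
  · refine Finset.sum_congr rfl fun p _ => ?_
    rw [Finset.sum_eq_card_nsmul (fun e he => by
      rw [Finset.mem_filter] at he; rw [he.2]), nsmul_eq_mul, myM]
  · induction e with
    | h u v =>
      have h1 := hpos u; have h2 := hdeg u; have h3 := hpos v; have h4 := hdeg v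
      simp only [Sym2.map_pair_eq, mySet, Finset.mem_insert, Finset.mem_singleton, Sym2.eq_iff]
      interval_cases (G.degree u) <;> interval_cases (G.degree v) <;> simp

theorem my_bridge (h : ℕ → ℕ → ℝ) (hc : ∀ a b, h a b = h b a) (e : Sym2 V) :
    Sym2.lift ⟨fun u v => h (G.degree u) (G.degree v), fun u v => hc _ _⟩ e
      = Sym2.lift ⟨h, hc⟩ (Sym2.map (fun v => G.degree v) e) := by
  induction e with
  | h u v => simp

theorem my_cnt (i j : ℕ) : edgeCnt G i j = myM G s(i, j) := by
  classical
  unfold edgeCnt myM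
  congr 1
  refine Finset.filter_congr fun e he => ?_
  induction e with
  | h u v => simp [Sym2.eq_iff]

theorem my_sum_mySet (g : Sym2 ℕ → ℝ) :
    ∑ p ∈ mySet, g p = g s(1,1) + g s(1,2) + g s(1,3) + g s(1,4) + g s(2,2) + g s(2,3)
      + g s(2,4) + g s(3,3) + g s(3,4) + g s(4,4) := by
  rw [mySet, Finset.sum_insert (by decide), Finset.sum_insert (by decide),
    Finset.sum_insert (by decide), Finset.sum_insert (by decide), Finset.sum_insert (by decide),
    Finset.sum_insert (by decide), Finset.sum_insert (by decide), Finset.sum_insert (by decide),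
    Finset.sum_insert (by decide), Finset.sum_singleton]
  ring

end Aux

/-- Identity (2) of the paper: expression of `SO₅(MT)/(2π)` for a molecular tree `MT` of
order `n` in terms of the edge counts `m_{ij}`. -/
theorem SO5_molecular_tree_identity {V : Type*} [Fintype V] [DecidableEq V]
    (G : SimpleGraph V) [DecidableRel G.Adj] (hT : G.IsTree) (hdeg : ∀ v : V, G.degree v ≤ 4)
    (n : ℕ) (hn : Fintype.card V = n) (hn3 : 3 ≤ n) :
    SO5 G / (2 * Real.pi) =
      (f 1 4 + f 2 4) / 2 * n + (3 * f 1 4 - 5 * f 2 4) / 2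
      + (edgeCnt G 1 2 : ℝ) * (f 1 2 - 3 / 2 * f 1 4 + 1 / 2 * f 2 4)
      + (edgeCnt G 1 3 : ℝ) * (f 1 3 - 7 / 6 * f 1 4 + 1 / 6 * f 2 4)
      - (edgeCnt G 2 2 : ℝ) * (1 / 2 * f 1 4 + 1 / 2 * f 2 4)
      + (edgeCnt G 2 3 : ℝ) * (f 2 3 - 1 / 6 * f 1 4 - 5 / 6 * f 2 4)
      + (edgeCnt G 3 3 : ℝ) * (1 / 6 * f 1 4 - 7 / 6 * f 2 4)
      + (edgeCnt G 3 4 : ℝ) * (f 3 4 + 1 / 3 * f 1 4 - 4 / 3 * f 2 4)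
      + (edgeCnt G 4 4 : ℝ) * (1 / 2 * f 1 4 - 3 / 2 * f 2 4) := by
  classical
  -- positivity of degrees
  have hcard : 3 ≤ Fintype.card V := hn ▸ hn3
  have hnt : Nontrivial V := Fintype.one_lt_card_iff_nontrivial.mp (by omega)
  have hpos : ∀ v : V, 1 ≤ G.degree v := by
    intro x
    have : 0 < G.degree x := by
      rw [G.degree_pos_iff_exists_adj]
      obtain ⟨y, hy⟩ := exists_ne x
      obtain ⟨p⟩ := hT.isConnected.preconnected x y
      cases p with
      | nil => exact absurd rfl hy
      | cons h _ => exact ⟨_, h⟩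
    omega
  -- m₁₁ = 0
  have h11 : myM G s(1, 1) = 0 := by
    rw [myM, Finset.card_eq_zero, Finset.filter_eq_empty_iff]
    intro e he
    induction e with
    | h u v =>
      intro hmap
      rw [SimpleGraph.mem_edgeFinset, SimpleGraph.mem_edgeSet] at he
      rw [Sym2.map_pair_eq, Sym2.eq_iff] at hmap
      have hdu : G.degree u = 1 := by tauto
      have hdv : G.degree v = 1 := by tauto
      have hNu : G.neighborFinset u = {v} := by
        obtain ⟨a, ha⟩ := Finset.card_eq_one.mp (hdu : (G.neighborFinset u).card = 1)
        have hv : v ∈ G.neighborFinset u := by rwa [SimpleGraph.mem_neighborFinset]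
        rw [ha] at hv ⊢
        rw [Finset.mem_singleton] at hv
        rw [hv]
      have hNv : G.neighborFinset v = {u} := by
        obtain ⟨a, ha⟩ := Finset.card_eq_one.mp (hdv : (G.neighborFinset v).card = 1)
        have hu : u ∈ G.neighborFinset v := by
          rw [SimpleGraph.mem_neighborFinset]; exact he.symm
        rw [ha] at hu ⊢
        rw [Finset.mem_singleton] at hu
        rw [hu]
      have key : ∀ {a b : V} (p : G.Walk a b), (a = u ∨ a = v) → (b = u ∨ b = v) := by
        intro a b p
        induction p with
        | nil => exact id
        | cons hadj p ih =>
          rename_i a' x b'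
          intro ha
          apply ih
          rcases ha with rfl | rfl
          · right
            have : x ∈ G.neighborFinset a' := by rwa [SimpleGraph.mem_neighborFinset]
            rw [hNu, Finset.mem_singleton] at this; exact this
          · left
            have : x ∈ G.neighborFinset a' := by rwa [SimpleGraph.mem_neighborFinset]
            rw [hNv, Finset.mem_singleton] at this; exact this
      have hw : ∃ w : V, w ≠ u ∧ w ≠ v := by
        by_contra hc
        push_neg at hc
        have hsub : (Finset.univ : Finset V) ⊆ {u, v} := by
          intro w _
          rcases eq_or_ne w u with rfl | hwu
          · exact Finset.mem_insert_self _ _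
          · rw [hc w hwu]; exact Finset.mem_insert_of_mem (Finset.mem_singleton_self _)
        have h1 := Finset.card_le_card hsub
        have h2 : ({u, v} : Finset V).card ≤ 2 :=
          (Finset.card_insert_le _ _).trans (by simp)
        rw [Finset.card_univ] at h1
        omega
      obtain ⟨w, hwu, hwv⟩ := hw
      obtain ⟨p⟩ := hT.isConnected.preconnected u w
      rcases key p (Or.inl rfl) with rfl | rfl
      · exact hwu rfl
      · exact hwv rfl
  -- the three linear equations
  have E1 : (∑ p ∈ mySet, (myM G p : ℝ)) + 1 = (n : ℝ) := by
    have h1 : ∑ e ∈ G.edgeFinset, (1 : ℝ) = ∑ p ∈ mySet, (myM G p : ℝ) * 1 :=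
      my_fiber_sum G hdeg hpos (fun _ => (1 : ℝ))
    have h2 : G.edgeFinset.card + 1 = Fintype.card V := hT.card_edgeFinset
    simp only [mul_one] at h1
    rw [Finset.sum_const, nsmul_eq_mul, mul_one] at h1
    rw [← h1, ← hn, ← h2]
    push_cast
    ring
  have E2 : ∑ p ∈ mySet, (myM G p : ℝ) * Sym2.lift ⟨fun a b : ℕ => (a : ℝ)⁻¹ + (b : ℝ)⁻¹,
      fun a b => by ring⟩ p = (n : ℝ) := by
    have hb : ∀ e ∈ G.edgeFinset,
        Sym2.lift ⟨fun u v => ((G.degree u : ℝ))⁻¹ + ((G.degree v : ℝ))⁻¹,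
          fun u v => by ring⟩ e
        = Sym2.lift ⟨fun a b : ℕ => (a : ℝ)⁻¹ + (b : ℝ)⁻¹, fun a b => by ring⟩
          (Sym2.map (fun v => G.degree v) e) :=
      fun e _ => my_bridge G (fun a b : ℕ => (a : ℝ)⁻¹ + (b : ℝ)⁻¹) (fun a b => by ring) e
    calc ∑ p ∈ mySet, (myM G p : ℝ) * Sym2.lift ⟨fun a b : ℕ => (a : ℝ)⁻¹ + (b : ℝ)⁻¹,
          fun a b => by ring⟩ p
        = ∑ e ∈ G.edgeFinset, Sym2.lift ⟨fun a b : ℕ => (a : ℝ)⁻¹ + (b : ℝ)⁻¹,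
            fun a b => by ring⟩ (Sym2.map (fun v => G.degree v) e) :=
          (my_fiber_sum G hdeg hpos _).symm
      _ = ∑ e ∈ G.edgeFinset, Sym2.lift ⟨fun u v => ((G.degree u : ℝ))⁻¹
            + ((G.degree v : ℝ))⁻¹, fun u v => by ring⟩ e :=
          (Finset.sum_congr rfl hb).symm
      _ = ∑ v, (G.degree v : ℝ) * ((G.degree v : ℝ))⁻¹ := my_dart_sum G (fun k => (k : ℝ)⁻¹)
      _ = ∑ v : V, (1 : ℝ) := Finset.sum_congr rfl (fun v _ =>
          mul_inv_cancel₀ (Nat.cast_ne_zero.mpr (by have := hpos v; omega)))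
      _ = (n : ℝ) := by rw [Finset.sum_const, Finset.card_univ, hn, nsmul_eq_mul, mul_one]
  have E3 : SO5 G / (2 * Real.pi) = ∑ p ∈ mySet, (myM G p : ℝ) *
      Sym2.lift ⟨fun a b : ℕ => f a b, fun a b => f_symm _ _⟩ p := by
    have hb : ∀ e ∈ G.edgeFinset,
        Sym2.lift ⟨fun u v => f (G.degree u) (G.degree v),
          fun u v => f_symm (G.degree u) (G.degree v)⟩ e
        = Sym2.lift ⟨fun a b : ℕ => f a b, fun a b => f_symm _ _⟩
          (Sym2.map (fun v => G.degree v) e) :=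
      fun e _ => my_bridge G (fun a b : ℕ => f a b) (fun a b => f_symm _ _) e
    rw [SO5, mul_div_cancel_left₀ _ (by positivity : (2 * Real.pi) ≠ 0),
      Finset.sum_congr rfl hb, my_fiber_sum G hdeg hpos]
  rw [E3]
  rw [my_cnt G 1 2, my_cnt G 1 3, my_cnt G 2 2, my_cnt G 2 3, my_cnt G 3 3,
    my_cnt G 3 4, my_cnt G 4 4]
  rw [my_sum_mySet] at E1 E2 ⊢
  have h11' : (myM G s(1,1) : ℝ) = 0 := by rw [h11]; norm_num
  simp only [Sym2.lift_mk] at E2 ⊢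
  norm_num [my_f_self] at E2 ⊢
  linear_combination (5/2 * f 2 4 - 3/2 * f 1 4) * E1 + (2 * f 1 4 - 2 * f 2 4) * E2
    + (3/2 * f 2 4 - 5/2 * f 1 4) * h11'
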